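/- arXiv:2105.04465 — 8 statements merged into one kernel-verified Lean document; each statement's English description precedes it below -/
import Mathlib

section
/- Fix integers 1 ≤ k ≤ n−1 and let S be a family of k-element subsets of the ground set Fin n. Then S is the collection of circuit-hyperplanes of a sparse paving matroid of rank k on Fin n if and only if any two distinct members of S intersect in at most k−2 elements (i.e. S is a stable set of the Johnson graph J(n,k); equivalently, the 0/1-indicator vectors of the members of S form a binary code of length n, constant weight k and minimum Hamming distance at least 4). -/
open Set Polynomial Pointwise

namespace EhrhartMatroid

variable {α : Type*}

/-- A circuit: a dependent set all of whose proper subsets are independent. -/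
def IsCircuit (M : Matroid α) (C : Set α) : Prop :=
  M.Dep C ∧ ∀ D, D ⊂ C → M.Indep D

/-- A hyperplane: a maximal proper flat. -/
def IsHyperplane (M : Matroid α) (H : Set α) : Prop :=
  M.IsFlat H ∧ H ≠ M.E ∧ ∀ F, M.IsFlat F → H ⊆ F → F = H ∨ F = M.E

/-- A circuit-hyperplane: simultaneously a circuit and a hyperplane. -/
def IsCircuitHyperplane (M : Matroid α) (H : Set α) : Prop :=
  IsCircuit M H ∧ IsHyperplane M H

/-- The rank of a matroid: the (common) cardinality of its bases. -/
noncomputable def rank (M : Matroid α) : ℕ :=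
  sSup {n | ∃ B, M.IsBase B ∧ B.ncard = n}

/-- A paving matroid: every circuit has cardinality at least the rank. -/
def IsPaving (M : Matroid α) : Prop :=
  ∀ C, IsCircuit M C → rank M ≤ C.ncard

/-- A sparse paving matroid: both the matroid and its dual are paving. -/
def IsSparsePaving (M : Matroid α) : Prop :=
  IsPaving M ∧ IsPaving M✶

/-- A matroid is connected if any two elements of the ground set either
coincide or lie in a common circuit. -/
def Connected (M : Matroid α) : Prop :=
  M.E.Nonempty ∧ ∀ e ∈ M.E, ∀ f ∈ M.E,
    e = f ∨ ∃ C, IsCircuit M C ∧ e ∈ C ∧ f ∈ C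

/-- The basis polytope of a matroid on `Fin n`: the convex hull of the
indicator vectors of the bases. -/
noncomputable def basisPolytope {n : ℕ} (M : Matroid (Fin n)) : Set (Fin n → ℝ) :=
  convexHull ℝ {x | ∃ B, M.IsBase B ∧ x = Set.indicator B 1}

/-- The hypersimplex `Δ_{k,n}`: the convex hull of all 0/1-vectors with exactly
`k` coordinates equal to `1`. It is the basis polytope of `U_{k,n}`. -/
noncomputable def hypersimplex (k n : ℕ) : Set (Fin n → ℝ) :=
  convexHull ℝ {x | ∃ B : Set (Fin n), B.ncard = k ∧ x = Set.indicator B 1}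

/-- The number of lattice points in the `t`-th dilate of `P ⊆ ℝ^n`. -/
noncomputable def latticeCount {n : ℕ} (P : Set (Fin n → ℝ)) (t : ℕ) : ℕ :=
  {z : Fin n → ℤ | (fun i => (z i : ℝ)) ∈ (t : ℝ) • P}.ncard

/-- A matroid on `Fin n` is Ehrhart positive if the polynomial counting the lattice
points of the dilates of its basis polytope has positive coefficients in all degrees
`0, …, natDegree`. -/
def EhrhartPositive {n : ℕ} (M : Matroid (Fin n)) : Prop :=
  ∀ p : Polynomial ℚ,
    (∀ t : ℕ, p.eval (t : ℚ) = latticeCount (basisPolytope M) t) →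
    ∀ m ≤ p.natDegree, 0 < p.coeff m

/-- The polynomial `binom(t+j, j) = (t+1)(t+2)⋯(t+j)/j!` in `ℚ[t]`. -/
noncomputable def binomPoly (j : ℕ) : Polynomial ℚ :=
  Polynomial.C (1 / (j.factorial : ℚ)) *
    ∏ i ∈ Finset.range j, (Polynomial.X + Polynomial.C ((i : ℚ) + 1))

/-- The Ehrhart polynomial `F_{k,n}` of the minimal matroid `T_{k,n}`. -/
noncomputable def F (k n : ℕ) : Polynomial ℚ :=
  Polynomial.C (1 / (((n - 1).choose (k - 1) : ℕ) : ℚ)) * binomPoly (n - k) *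
    ∑ j ∈ Finset.range k, Polynomial.C (((n - k - 1 + j).choose j : ℕ) : ℚ) * binomPoly j

/-- The shifted polynomial `F_{k,n}(t-1)`. -/
noncomputable def Fshift (k n : ℕ) : Polynomial ℚ :=
  (F k n).comp (Polynomial.X - 1)


section Aux

variable {n k : ℕ} {S : Set (Set (Fin n))}

/-- Stability hypothesis abbreviation. -/
def Stab (n k : ℕ) (S : Set (Set (Fin n))) : Prop :=
  ∀ A ∈ S, ∀ B ∈ S, A ≠ B → ((A ∩ B).ncard : ℤ) ≤ (k : ℤ) - 2

lemma card_univ_fin : (Set.univ : Set (Fin n)).ncard = n := by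
  rw [Set.ncard_univ, Nat.card_eq_fintype_card, Fintype.card_fin]

lemma extend_lemma (hk : 1 ≤ k) (hkn : k + 1 ≤ n) (hst : Stab n k S)
    {I : Set (Fin n)} (hI : I.ncard < k) :
    ∃ B, I ⊆ B ∧ B.ncard = k ∧ B ∉ S := by
  obtain ⟨J, hIJ, -, hJ⟩ := Set.exists_subsuperset_card_eq (subset_univ I)
    (show I.ncard ≤ k - 1 by omega) (by rw [card_univ_fin]; omega)
  have hcompl : J.ncard + Jᶜ.ncard = n := by
    rw [Set.ncard_add_ncard_compl, Nat.card_eq_fintype_card, Fintype.card_fin]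
  obtain ⟨x, y, hx, hy, hxy⟩ := (Set.one_lt_ncard_iff (toFinite Jᶜ)).mp (by omega)
  have hxJ : x ∉ J := hx
  have hyJ : y ∉ J := hy
  have hc1 : (insert x J).ncard = k := by
    rw [Set.ncard_insert_of_notMem hxJ (toFinite J)]; omega
  have hc2 : (insert y J).ncard = k := by
    rw [Set.ncard_insert_of_notMem hyJ (toFinite J)]; omega
  by_cases h1 : insert x J ∈ S
  · refine ⟨insert y J, hIJ.trans (subset_insert _ _), hc2, fun h2 => ?_⟩
    have hne : insert x J ≠ insert y J := fun h => hxJ (by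
      have : x ∈ insert y J := h ▸ mem_insert x J
      rcases this with h' | h'
      · exact absurd h' hxy
      · exact h')
    have hsub : J ⊆ insert x J ∩ insert y J :=
      subset_inter (subset_insert _ _) (subset_insert _ _)
    have hle : J.ncard ≤ (insert x J ∩ insert y J).ncard :=
      Set.ncard_le_ncard hsub (toFinite _)
    have := hst _ h1 _ h2 hne
    omega
  · exact ⟨insert x J, hIJ.trans (subset_insert _ _), hc1, h1⟩

lemma exchange_lemma (hk : 1 ≤ k) (hkn : k + 1 ≤ n) (hst : Stab n k S) :
    Matroid.ExchangeProperty (fun B : Set (Fin n) => B.ncard = k ∧ B ∉ S) := by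
  rintro X Y ⟨hXk, hXS⟩ ⟨hYk, hYS⟩ a ha
  have haX : a ∈ X := ha.1
  have hJc : (X \ {a}).ncard + 1 = k := by
    rw [Set.ncard_diff_singleton_add_one haX (toFinite X)]; exact hXk
  have hYXne : (Y \ X).Nonempty := by
    rw [Set.nonempty_iff_ne_empty]
    intro h
    have hsub : Y ⊆ X := diff_eq_empty.mp h
    have : Y = X := Set.eq_of_subset_of_ncard_le hsub (by omega) (toFinite X)
    exact ha.2 (this ▸ haX)
  by_cases h2 : 1 < (Y \ X).ncard
  · obtain ⟨b, c, hb, hc, hbc⟩ := (Set.one_lt_ncard_iff (toFinite _)).mp h2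
    have hbJ : b ∉ X \ {a} := fun h => hb.2 h.1
    have hcJ : c ∉ X \ {a} := fun h => hc.2 h.1
    have hc1 : (insert b (X \ {a})).ncard = k := by
      rw [Set.ncard_insert_of_notMem hbJ (toFinite _)]; omega
    have hc2 : (insert c (X \ {a})).ncard = k := by
      rw [Set.ncard_insert_of_notMem hcJ (toFinite _)]; omega
    by_cases h1 : insert b (X \ {a}) ∈ S
    · refine ⟨c, hc, hc2, fun h3 => ?_⟩
      have hne : insert b (X \ {a}) ≠ insert c (X \ {a}) := fun h => hbJ (by
        have : b ∈ insert c (X \ {a}) := h ▸ mem_insert _ _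
        rcases this with h' | h'
        · exact absurd h' hbc
        · exact h')
      have hsub : X \ {a} ⊆ insert b (X \ {a}) ∩ insert c (X \ {a}) :=
        subset_inter (subset_insert _ _) (subset_insert _ _)
      have hle : (X \ {a}).ncard ≤ (insert b (X \ {a}) ∩ insert c (X \ {a})).ncard :=
        Set.ncard_le_ncard hsub (toFinite _)
      have := hst _ h1 _ h3 hne
      omega
    · exact ⟨b, hb, hc1, h1⟩
  · -- Y \ X is a singleton
    have hYX1 : (Y \ X).ncard = 1 := by
      have := hYXne.ncard_pos (toFinite _)
      omega
    obtain ⟨b, hbY⟩ := Set.ncard_eq_one.mp hYX1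
    have hXYcard : (X \ Y).ncard = 1 := by
      have h1 : (X ∩ Y).ncard + (X \ Y).ncard = X.ncard := by
        rw [← Set.ncard_union_eq (Set.disjoint_of_subset_left Set.inter_subset_right
          Set.disjoint_sdiff_right) (toFinite _) (toFinite _), Set.inter_union_diff]
      have h2 : (Y ∩ X).ncard + (Y \ X).ncard = Y.ncard := by
        rw [← Set.ncard_union_eq (Set.disjoint_of_subset_left Set.inter_subset_right
          Set.disjoint_sdiff_right) (toFinite _) (toFinite _), Set.inter_union_diff]
      rw [Set.inter_comm] at h2
      omega
    have hXY : X \ Y = {a} := by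
      obtain ⟨a', ha'⟩ := Set.ncard_eq_one.mp hXYcard
      have : a = a' := by
        have := ha' ▸ ha
        exact this
      rw [ha', this]
    have hXa : X \ {a} = X ∩ Y := by rw [← hXY, Set.diff_diff_right_self]
    refine ⟨b, hbY ▸ rfl, ?_⟩
    have : insert b (X \ {a}) = Y := by
      rw [hXa, Set.insert_eq, Set.inter_comm, ← hbY, Set.diff_union_inter]
    rw [this]
    exact ⟨hYk, hYS⟩

variable {M : Matroid (Fin n)}

lemma indep_char (hk : 1 ≤ k) (hkn : k + 1 ≤ n) (hst : Stab n k S)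
    (hB : ∀ B, M.IsBase B ↔ (B.ncard = k ∧ B ∉ S)) (I : Set (Fin n)) :
    M.Indep I ↔ (I.ncard < k ∨ (I.ncard = k ∧ I ∉ S)) := by
  constructor
  · intro h
    obtain ⟨B, hBb, hIB⟩ := Matroid.indep_iff.mp h
    obtain ⟨hBk, hBS⟩ := (hB B).mp hBb
    have h1 : I.ncard ≤ k := hBk ▸ Set.ncard_le_ncard hIB (toFinite B)
    rcases lt_or_eq_of_le h1 with h2 | h2
    · exact Or.inl h2
    · right
      refine ⟨h2, ?_⟩
      have : I = B := Set.eq_of_subset_of_ncard_le hIB (by omega) (toFinite B)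
      rw [this]; exact hBS
  · rintro (h | ⟨h1, h2⟩)
    · obtain ⟨B, hIB, hBk, hBS⟩ := extend_lemma hk hkn hst h
      exact Matroid.indep_iff.mpr ⟨B, (hB B).mpr ⟨hBk, hBS⟩, hIB⟩
    · exact Matroid.indep_iff.mpr ⟨I, (hB I).mpr ⟨h1, h2⟩, subset_rfl⟩

lemma exists_base (hk : 1 ≤ k) (hkn : k + 1 ≤ n) (hst : Stab n k S) :
    ∃ B : Set (Fin n), B.ncard = k ∧ B ∉ S := by
  obtain ⟨B, -, h1, h2⟩ := extend_lemma hk hkn hst (I := ∅) (by simp; omega)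
  exact ⟨B, h1, h2⟩

lemma rank_char (hk : 1 ≤ k) (hkn : k + 1 ≤ n) (hst : Stab n k S)
    (hB : ∀ B, M.IsBase B ↔ (B.ncard = k ∧ B ∉ S)) : rank M = k := by
  have hset : {m | ∃ B, M.IsBase B ∧ B.ncard = m} = {k} := by
    ext m
    simp only [mem_setOf_eq, mem_singleton_iff]
    constructor
    · rintro ⟨B, hBb, rfl⟩; exact ((hB B).mp hBb).1
    · rintro rfl
      obtain ⟨B, h1, h2⟩ := exists_base hk hkn hst
      exact ⟨B, (hB B).mpr ⟨h1, h2⟩, h1⟩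
  rw [rank, hset, csSup_singleton]

lemma paving_char (hk : 1 ≤ k) (hkn : k + 1 ≤ n) (hst : Stab n k S)
    (hB : ∀ B, M.IsBase B ↔ (B.ncard = k ∧ B ∉ S)) : IsPaving M := by
  intro C hC
  rw [rank_char hk hkn hst hB]
  have h1 : ¬ M.Indep C := hC.1.not_indep
  rw [indep_char hk hkn hst hB] at h1
  push_neg at h1
  omega

lemma insert_indep (hk : 1 ≤ k) (hkn : k + 1 ≤ n) (hst : Stab n k S) (hS : ∀ A ∈ S, A.ncard = k)
    (hB : ∀ B, M.IsBase B ↔ (B.ncard = k ∧ B ∉ S)) {A I : Set (Fin n)} (hA : A ∈ S)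
    (hIA : I ⊆ A) (hIc : I.ncard < k) {e : Fin n} (he : e ∉ A) :
    M.Indep (insert e I) := by
  have heI : e ∉ I := fun h => he (hIA h)
  have hcard : (insert e I).ncard = I.ncard + 1 :=
    Set.ncard_insert_of_notMem heI (toFinite I)
  rw [indep_char hk hkn hst hB]
  by_cases h1 : I.ncard + 1 < k
  · exact Or.inl (by omega)
  · right
    refine ⟨by omega, fun h2 => ?_⟩
    have hne : insert e I ≠ A := fun h => he (h ▸ mem_insert e I)
    have hsub : I ⊆ insert e I ∩ A := subset_inter (subset_insert _ _) hIA
    have hle : I.ncard ≤ (insert e I ∩ A).ncard := Set.ncard_le_ncard hsub (toFinite _)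
    have := hst _ h2 _ hA hne
    omega

lemma mem_S_CH (hk : 1 ≤ k) (hkn : k + 1 ≤ n) (hst : Stab n k S) (hS : ∀ A ∈ S, A.ncard = k)
    (hE : M.E = Set.univ) (hB : ∀ B, M.IsBase B ↔ (B.ncard = k ∧ B ∉ S))
    {A : Set (Fin n)} (hA : A ∈ S) : IsCircuitHyperplane M A := by
  have hAE : A ⊆ M.E := hE ▸ subset_univ A
  have hAk : A.ncard = k := hS A hA
  have hAdep : M.Dep A := by
    rw [Matroid.dep_iff, indep_char hk hkn hst hB]
    exact ⟨by push_neg; exact ⟨by omega, fun _ => hA⟩, hAE⟩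
  have hflat : M.IsFlat A := by
    constructor
    · intro I X hIA hIX
      intro e heX
      by_contra heA
      have hIindep := hIA.indep
      have hIsub : I ⊆ A := hIA.subset
      have hIc : I.ncard < k := by
        have h1 : I.ncard ≤ k := hAk ▸ Set.ncard_le_ncard hIsub (toFinite A)
        rcases lt_or_eq_of_le h1 with h2 | h2
        · exact h2
        · exfalso
          have : I = A := Set.eq_of_subset_of_ncard_le hIsub (by omega) (toFinite A)
          exact hAdep.not_indep (this ▸ hIindep)
      have hins : M.Indep (insert e I) := insert_indep hk hkn hst hS hB hA hIsub hIc heA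
      have hecl : e ∈ M.closure I := hIX.subset_closure heX
      have heI : e ∉ I := fun h => heA (hIsub h)
      rcases hIindep.mem_closure_iff.mp hecl with h | h
      · exact h.not_indep hins
      · exact heI h
    · exact hAE
  refine ⟨⟨hAdep, fun D hD => ?_⟩, hflat, ?_, ?_⟩
  · rw [indep_char hk hkn hst hB]
    exact Or.inl (hAk ▸ Set.ncard_lt_ncard hD (toFinite A))
  · intro h
    have : A.ncard = n := by rw [h, hE, card_univ_fin]
    omega
  · intro F hF hAF
    by_cases hFA : F = A
    · exact Or.inl hFA
    · right
      obtain ⟨e, heF, heA⟩ := Set.exists_of_ssubset (hAF.ssubset_of_ne (Ne.symm hFA))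
      have hAne : A.Nonempty := Set.nonempty_of_ncard_ne_zero (by omega)
      obtain ⟨a, haA⟩ := hAne
      have hJc : (A \ {a}).ncard + 1 = k := by
        rw [Set.ncard_diff_singleton_add_one haA (toFinite A)]; exact hAk
      have hBindep : M.Indep (insert e (A \ {a})) :=
        insert_indep hk hkn hst hS hB hA diff_subset (by omega) heA
      have hBcard : (insert e (A \ {a})).ncard = k := by
        rw [Set.ncard_insert_of_notMem (fun h => heA h.1) (toFinite _)]; omega
      have hBbase : M.IsBase (insert e (A \ {a})) := by
        rw [hB]
        refine ⟨hBcard, ?_⟩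
        rcases (indep_char hk hkn hst hB _).mp hBindep with h | h
        · omega
        · exact h.2
      have hsubF : insert e (A \ {a}) ⊆ F :=
        insert_subset heF (diff_subset.trans hAF)
      have : M.E ⊆ F := by
        rw [← hBbase.closure_eq]
        calc M.closure (insert e (A \ {a})) ⊆ M.closure F := M.closure_subset_closure hsubF
          _ = F := hF.closure
      exact subset_antisymm hF.subset_ground this

lemma CH_mem_S (hk : 1 ≤ k) (hkn : k + 1 ≤ n) (hst : Stab n k S)
    (hE : M.E = Set.univ) (hB : ∀ B, M.IsBase B ↔ (B.ncard = k ∧ B ∉ S))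
    {H : Set (Fin n)} (hH : IsCircuitHyperplane M H) : H ∈ S := by
  obtain ⟨⟨hdep, hmin⟩, hflat, hne, -⟩ := hH
  have h1 : ¬ M.Indep H := hdep.not_indep
  rw [indep_char hk hkn hst hB] at h1
  push_neg at h1
  obtain ⟨h2, h3⟩ := h1
  by_cases h4 : H.ncard = k
  · exact h3 h4
  · exfalso
    have h5 : k < H.ncard := by omega
    obtain ⟨D, hDH, hDk⟩ := Set.exists_subset_card_eq (le_of_lt h5)
    have hDss : D ⊂ H := hDH.ssubset_of_ne (fun h => by rw [h] at hDk; omega)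
    have hDindep := hmin D hDss
    have hDbase : M.IsBase D := by
      rw [hB]
      refine ⟨hDk, ?_⟩
      rcases (indep_char hk hkn hst hB _).mp hDindep with h | h
      · omega
      · exact h.2
    apply hne
    have : M.E ⊆ H := by
      rw [← hDbase.closure_eq]
      calc M.closure D ⊆ M.closure H := M.closure_subset_closure hDH
        _ = H := hflat.closure
    exact subset_antisymm hflat.subset_ground this
end Aux

theorem circuitHyperplanes_iff_stable (n k : ℕ) (hk : 1 ≤ k) (hkn : k ≤ n - 1)
    (S : Set (Set (Fin n))) (hS : ∀ A ∈ S, A.ncard = k) :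
    (∃ M : Matroid (Fin n), M.E = Set.univ ∧ IsSparsePaving M ∧ rank M = k ∧
        {H | IsCircuitHyperplane M H} = S) ↔
      ∀ A ∈ S, ∀ B ∈ S, A ≠ B → ((A ∩ B).ncard : ℤ) ≤ (k : ℤ) - 2 := by
  have hn : 2 ≤ n := by omega
  have hkn' : k + 1 ≤ n := by omega
  constructor
  · rintro ⟨M, hE, hsp, hrk, hCH⟩ A hA B hB hne
    by_contra hgt
    push_neg at hgt
    have hAk := hS A hA
    have hBk := hS B hB
    rw [← hCH] at hA hB
    have hAch : IsCircuitHyperplane M A := hA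
    have hBch : IsCircuitHyperplane M B := hB
    have hABle : (A ∩ B).ncard ≤ k - 1 := by
      have h1 : (A ∩ B).ncard ≤ k :=
        hAk ▸ Set.ncard_le_ncard inter_subset_left (toFinite A)
      rcases lt_or_eq_of_le h1 with h | h
      · omega
      · exfalso
        have hABA : A ∩ B = A :=
          Set.eq_of_subset_of_ncard_le inter_subset_left (by omega) (toFinite A)
        have hAB : A ⊆ B := by rw [← hABA]; exact inter_subset_right
        exact hne (Set.eq_of_subset_of_ncard_le hAB (by omega) (toFinite B))
    obtain ⟨e, heB, heA⟩ : (B \ A).Nonempty := by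
      rw [Set.nonempty_iff_ne_empty]; intro h
      exact hne (Set.eq_of_subset_of_ncard_le (diff_eq_empty.mp h)
        (by omega) (toFinite A)).symm
    have hBe : A ∩ B = B \ {e} := by
      refine Set.eq_of_subset_of_ncard_le ?_ ?_ (toFinite _)
      · intro x hx
        refine ⟨hx.2, fun hxe => ?_⟩
        rw [Set.mem_singleton_iff] at hxe
        exact heA (hxe ▸ hx.1)
      · have h1 : (B \ {e}).ncard + 1 = k := by
          rw [Set.ncard_diff_singleton_add_one heB (toFinite B)]; exact hBk
        omega
    have hindep : M.Indep (B \ {e}) := hBch.1.2 _ (Set.sdiff_singleton_ssubset.mpr heB)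
    have hdep : M.Dep (insert e (B \ {e})) := by
      rw [Set.insert_diff_singleton, Set.insert_eq_of_mem heB]
      exact hBch.1.1
    have hecl : e ∈ M.closure (B \ {e}) := hindep.mem_closure_iff.mpr (Or.inl hdep)
    rw [← hBe] at hecl
    have h2 := M.closure_subset_closure (inter_subset_left : A ∩ B ⊆ A)
    rw [hAch.2.1.closure] at h2
    exact heA (h2 hecl)
  · intro hstab
    obtain ⟨B0, hB01, hB02⟩ := exists_base hk hkn' hstab
    let M : Matroid (Fin n) := Matroid.ofIsBaseOfFinite (Set.toFinite Set.univ)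
      (fun B => B.ncard = k ∧ B ∉ S) ⟨B0, hB01, hB02⟩
      (exchange_lemma hk hkn' hstab) (fun B _ => subset_univ B)
    have hE : M.E = Set.univ := rfl
    have hBase : ∀ B, M.IsBase B ↔ (B.ncard = k ∧ B ∉ S) := fun B => Iff.rfl
    have hcompl : ∀ A : Set (Fin n), A.ncard + Aᶜ.ncard = n := fun A => by
      rw [Set.ncard_add_ncard_compl, Nat.card_eq_fintype_card, Fintype.card_fin]
    have hdualB : ∀ B, M✶.IsBase B ↔ (B.ncard = n - k ∧ B ∉ (compl '' S)) := by
      intro B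
      rw [Matroid.dual_isBase_iff (by rw [hE]; exact subset_univ B)]
      have hEB : M.E \ B = Bᶜ := by rw [hE]; exact (Set.compl_eq_univ_diff B).symm
      rw [hEB, hBase]
      have h1 := hcompl B
      constructor
      · rintro ⟨h2, h3⟩
        refine ⟨by omega, fun h4 => h3 ?_⟩
        obtain ⟨A, hA, hAB⟩ := h4
        rw [← hAB, compl_compl]; exact hA
      · rintro ⟨h2, h3⟩
        exact ⟨by omega, fun h4 => h3 ⟨Bᶜ, h4, compl_compl B⟩⟩
    have hstab' : Stab n (n - k) (compl '' S) := by
      rintro _ ⟨A, hA, rfl⟩ _ ⟨B, hB, rfl⟩ hne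
      have hAB : A ≠ B := fun h => hne (h ▸ rfl)
      have h1 := hstab A hA B hB hAB
      have h2 : Aᶜ ∩ Bᶜ = (A ∪ B)ᶜ := (Set.compl_union A B).symm
      have h3 : (A ∩ B).ncard + (A ∪ B).ncard = A.ncard + B.ncard :=
        Set.ncard_inter_add_ncard_union A B (toFinite _) (toFinite _)
      have h4 := hcompl (A ∪ B)
      have h5 := hS A hA
      have h6 := hS B hB
      rw [h2]
      omega
    refine ⟨M, hE, ⟨paving_char hk hkn' hstab hBase, ?_⟩,
      rank_char hk hkn' hstab hBase, ?_⟩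
    · exact paving_char (by omega) (by omega) hstab' hdualB
    · ext H
      simp only [mem_setOf_eq]
      exact ⟨fun h => CH_mem_S hk hkn' hstab hE hBase h,
        fun h => mem_S_CH hk hkn' hstab hS hE hBase h⟩


end EhrhartMatroid
end

section
/- For all integers n ≥ 1 and 0 ≤ k ≤ n there exists a family S of k-element subsets of Fin n such that any two distinct members of S intersect in at most k−2 elements (equivalently, the 0/1-indicator vectors of the members of S form a binary code of length n, constant weight k and minimum Hamming distance at least 4) and n·|S| ≥ binom(n,k). -/
open Set Polynomial Pointwise

namespace EhrhartMatroid

variable {α : Type*}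

theorem exists_large_constant_weight_code (n k : ℕ) (hn : 1 ≤ n) (hk : k ≤ n) :
    ∃ S : Finset (Finset (Fin n)),
      (∀ A ∈ S, A.card = k) ∧
      (∀ A ∈ S, ∀ B ∈ S, A ≠ B → ((A ∩ B).card : ℤ) ≤ (k : ℤ) - 2) ∧
      n.choose k ≤ n * S.card := by
  classical
  haveI : NeZero n := ⟨by omega⟩
  set g : Finset (Fin n) → ZMod n := fun A => ∑ x ∈ A, ((x : ℕ) : ZMod n) with hg
  set T : Finset (Finset (Fin n)) := Finset.powersetCard k Finset.univ with hT
  obtain ⟨c, -, hc⟩ := Finset.exists_max_image (Finset.univ : Finset (ZMod n))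
    (fun c => (T.filter fun A => g A = c).card) Finset.univ_nonempty
  refine ⟨T.filter fun A => g A = c, ?_, ?_, ?_⟩
  · intro A hA
    have := (Finset.mem_filter.mp hA).1
    exact (Finset.mem_powersetCard.mp this).2
  · intro A hA B hB hAB
    have hAk : A.card = k := (Finset.mem_powersetCard.mp (Finset.mem_filter.mp hA).1).2
    have hBk : B.card = k := (Finset.mem_powersetCard.mp (Finset.mem_filter.mp hB).1).2
    have hgA : g A = c := (Finset.mem_filter.mp hA).2
    have hgB : g B = c := (Finset.mem_filter.mp hB).2
    by_contra h
    push_neg at h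
    -- A ∩ B has card exactly k - 1
    have hlt : (A ∩ B).card < k := by
      rcases lt_or_eq_of_le (le_trans (Finset.card_le_card Finset.inter_subset_left) hAk.le)
        with h' | h'
      · exact h'
      · exfalso
        have : A ∩ B = A := Finset.eq_of_subset_of_card_le Finset.inter_subset_left
          (by omega)
        have hsub : A ⊆ B := by
          rw [← this]; exact Finset.inter_subset_right
        exact hAB (Finset.eq_of_subset_of_card_le hsub (by omega))
    have hcard : (A ∩ B).card = k - 1 ∧ 1 ≤ k := by
      have : (k : ℤ) - 2 < ((A ∩ B).card : ℤ) := h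
      omega
    have hAd : (A \ B).card = 1 := by
      have := Finset.card_inter_add_card_sdiff A B
      omega
    have hBd : (B \ A).card = 1 := by
      have := Finset.card_inter_add_card_sdiff B A
      rw [Finset.inter_comm] at this
      omega
    obtain ⟨a, ha⟩ := Finset.card_eq_one.mp hAd
    obtain ⟨b, hb⟩ := Finset.card_eq_one.mp hBd
    have hsumA : ∑ x ∈ A ∩ B, ((x : ℕ) : ZMod n) + ((a : ℕ) : ZMod n) = g A := by
      have := Finset.sum_inter_add_sum_sdiff A B (fun x => ((x : ℕ) : ZMod n))
      rw [ha, Finset.sum_singleton] at this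
      exact this
    have hsumB : ∑ x ∈ A ∩ B, ((x : ℕ) : ZMod n) + ((b : ℕ) : ZMod n) = g B := by
      have := Finset.sum_inter_add_sum_sdiff B A (fun x => ((x : ℕ) : ZMod n))
      rw [hb, Finset.sum_singleton, Finset.inter_comm] at this
      exact this
    have hab : ((a : ℕ) : ZMod n) = ((b : ℕ) : ZMod n) := by
      have : ∑ x ∈ A ∩ B, ((x : ℕ) : ZMod n) + ((a : ℕ) : ZMod n)
          = ∑ x ∈ A ∩ B, ((x : ℕ) : ZMod n) + ((b : ℕ) : ZMod n) := by
        rw [hsumA, hsumB, hgA, hgB]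
      exact add_left_cancel this
    have habv : (a : ℕ) = (b : ℕ) := by
      have h1 := ZMod.val_cast_of_lt a.isLt
      have h2 := ZMod.val_cast_of_lt b.isLt
      rw [← h1, ← h2, hab]
    have : a = b := Fin.ext habv
    have haA : a ∈ A \ B := by rw [ha]; exact Finset.mem_singleton_self a
    have hbB : b ∈ B \ A := by rw [hb]; exact Finset.mem_singleton_self b
    rw [this] at haA
    exact (Finset.mem_sdiff.mp haA).2 (Finset.mem_sdiff.mp hbB).1
  · have hcount : T.card = ∑ c ∈ (Finset.univ : Finset (ZMod n)),
        (T.filter fun A => g A = c).card :=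
      Finset.card_eq_sum_card_fiberwise (fun A _ => Finset.mem_univ (g A))
    have hTcard : T.card = n.choose k := by
      rw [hT, Finset.card_powersetCard, Finset.card_univ, Fintype.card_fin]
    have hsum : ∑ c' ∈ (Finset.univ : Finset (ZMod n)),
        (T.filter fun A => g A = c').card
        ≤ (Finset.univ : Finset (ZMod n)).card * (T.filter fun A => g A = c).card := by
      calc ∑ c' ∈ (Finset.univ : Finset (ZMod n)), (T.filter fun A => g A = c').card
          ≤ (Finset.univ : Finset (ZMod n)).card • (T.filter fun A => g A = c).card :=
            Finset.sum_le_card_nsmul _ _ _ (fun c' hc' => hc c' hc')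
        _ = _ := by rw [smul_eq_mul]
    have hzcard : (Finset.univ : Finset (ZMod n)).card = n := by
      rw [Finset.card_univ, ZMod.card]
    rw [hzcard] at hsum
    omega

end EhrhartMatroid
end

section
/- For integers 1 ≤ k < n, the coefficient of t² in the polynomial F_{k,n}(t−1) equals (1/binom(n−1,k−1)) · ( c(n−k,2)/(n−k)! + (1/(n−k)) · Σ_{j=1}^{k−1} (1/j)·binom(n−k−1+j, j) ). -/
open Set Polynomial Pointwise

namespace EhrhartMatroid

variable {α : Type*}

lemma ascQ_prod (j : ℕ) :
    ascPochhammer ℚ j = ∏ i ∈ Finset.range j, (Polynomial.X + Polynomial.C (i : ℚ)) := by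
  induction j with
  | zero => simp
  | succ n ih =>
    rw [ascPochhammer_succ_right, ih, Finset.prod_range_succ]
    simp [Polynomial.C_eq_natCast]

lemma binom_comp (j : ℕ) :
    (binomPoly j).comp (Polynomial.X - 1) =
      Polynomial.C (1 / (j.factorial : ℚ)) * ascPochhammer ℚ j := by
  rw [binomPoly, Polynomial.mul_comp, Polynomial.C_comp, Polynomial.prod_comp, ascQ_prod]
  congr 1
  refine Finset.prod_congr rfl fun i _ => ?_
  rw [Polynomial.add_comp, Polynomial.X_comp, Polynomial.C_comp, Polynomial.C_add,
    Polynomial.C_1]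
  ring

lemma asc_coeff_zero (j : ℕ) :
    (ascPochhammer ℚ j).coeff 0 = if j = 0 then 1 else 0 := by
  rw [Polynomial.coeff_zero_eq_eval_zero, ascPochhammer_eval_zero]

lemma asc_coeff_one : ∀ j : ℕ, 1 ≤ j → (ascPochhammer ℚ j).coeff 1 = ((j-1).factorial : ℚ)
  | 1, _ => by simp [ascPochhammer_one]
  | (n+2), _ => by
    rw [ascPochhammer_succ_right, ← Polynomial.C_eq_natCast, mul_add, Polynomial.coeff_add,
      Polynomial.coeff_mul_X, Polynomial.coeff_mul_C, asc_coeff_one (n+1) (by omega),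
      Polynomial.coeff_zero_eq_eval_zero, ascPochhammer_ne_zero_eval_zero (S := ℚ) (Nat.succ_ne_zero n)]
    push_cast [Nat.factorial_succ]
    ring

lemma asc_coeff_cast (m i : ℕ) :
    (ascPochhammer ℚ m).coeff i = ((ascPochhammer ℕ m).coeff i : ℚ) := by
  rw [← ascPochhammer_map (Nat.castRingHom ℚ) m, Polynomial.coeff_map]
  simp

lemma coeff2_mul (p q : Polynomial ℚ) :
    (p * q).coeff 2 =
      p.coeff 0 * q.coeff 2 + p.coeff 1 * q.coeff 1 + p.coeff 2 * q.coeff 0 := by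
  rw [Polynomial.coeff_mul, show (Finset.HasAntidiagonal.antidiagonal 2 : Finset (ℕ × ℕ)) =
    {(0,2),(1,1),(2,0)} from rfl, Finset.sum_insert (by decide),
    Finset.sum_insert (by decide), Finset.sum_singleton]
  ring

theorem coeff_two_Fshift (n k : ℕ) (hk : 1 ≤ k) (hkn : k < n) :
    (Fshift k n).coeff 2 =
      (1 / (((n - 1).choose (k - 1) : ℕ) : ℚ)) *
        ((((ascPochhammer ℕ (n - k)).coeff 2 : ℕ) : ℚ) / ((n - k).factorial : ℚ) +
          (1 / (((n - k : ℕ)) : ℚ)) *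
            ∑ j ∈ Finset.Icc 1 (k - 1),
              (1 / (j : ℚ)) * (((n - k - 1 + j).choose j : ℕ) : ℚ)) := by
  have hm1 : 1 ≤ n - k := by omega
  have hset : Finset.range k = insert 0 (Finset.Icc 1 (k-1)) := by
    ext x; simp only [Finset.mem_range, Finset.mem_insert, Finset.mem_Icc]; omega
  have h0 : (0:ℕ) ∉ Finset.Icc 1 (k-1) := by simp
  rw [Fshift, F, Polynomial.mul_comp, Polynomial.mul_comp, Polynomial.C_comp,
    Polynomial.sum_comp]
  simp only [Polynomial.mul_comp, Polynomial.C_comp, binom_comp]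
  rw [mul_assoc, Polynomial.coeff_C_mul, coeff2_mul]
  simp only [Polynomial.coeff_C_mul, Polynomial.finset_sum_coeff]
  have hsum0 : (∑ x ∈ Finset.range k, (((n - k - 1 + x).choose x : ℕ) : ℚ) *
      (1 / (x.factorial : ℚ) * (ascPochhammer ℚ x).coeff 0)) = 1 := by
    rw [hset, Finset.sum_insert h0, Finset.sum_eq_zero, asc_coeff_zero]
    · simp
    · intro j hj
      have hj1 : 1 ≤ j := (Finset.mem_Icc.mp hj).1
      rw [asc_coeff_zero, if_neg (by omega)]
      ring
  have hsum1 : (∑ x ∈ Finset.range k, (((n - k - 1 + x).choose x : ℕ) : ℚ) *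
      (1 / (x.factorial : ℚ) * (ascPochhammer ℚ x).coeff 1)) =
      ∑ j ∈ Finset.Icc 1 (k-1), 1 / (j:ℚ) * (((n - k - 1 + j).choose j : ℕ) : ℚ) := by
    rw [hset, Finset.sum_insert h0]
    have h00 : (ascPochhammer ℚ 0).coeff 1 = 0 := by
      simp [ascPochhammer_zero, Polynomial.coeff_one]
    rw [h00, mul_zero, mul_zero, zero_add]
    refine Finset.sum_congr rfl fun j hj => ?_
    have hj1 : 1 ≤ j := (Finset.mem_Icc.mp hj).1
    rw [asc_coeff_one j hj1]
    have hfj : (j.factorial : ℚ) = j * (j-1).factorial := by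
      rw [← Nat.mul_factorial_pred (by omega)]; push_cast; ring
    have hj0 : (j:ℚ) ≠ 0 := Nat.cast_ne_zero.mpr (by omega)
    have hf0 : ((j-1).factorial : ℚ) ≠ 0 := Nat.cast_ne_zero.mpr (Nat.factorial_ne_zero _)
    rw [hfj, one_div, mul_inv, mul_assoc, inv_mul_cancel₀ hf0, mul_one, one_div]
    ring
  rw [hsum0, hsum1, asc_coeff_zero, if_neg (by omega), asc_coeff_one _ hm1,
    asc_coeff_cast (n-k) 2]
  have hfm : ((n-k).factorial : ℚ) = ((n-k:ℕ):ℚ) * ((n-k-1).factorial : ℚ) := by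
    exact_mod_cast (Nat.mul_factorial_pred (n := n - k) (by omega)).symm
  have hm0 : ((n-k : ℕ):ℚ) ≠ 0 := Nat.cast_ne_zero.mpr (by omega)
  have hf0 : (((n-k-1)).factorial : ℚ) ≠ 0 := Nat.cast_ne_zero.mpr (Nat.factorial_ne_zero _)
  have hc : (((n-1).choose (k-1) : ℕ) : ℚ) ≠ 0 :=
    Nat.cast_ne_zero.mpr (Nat.choose_pos (by omega)).ne'
  rw [hfm]
  field_simp
  ring


end EhrhartMatroid
end

section
/- For integers 2 ≤ k ≤ n−1, the coefficient of t² in the polynomial F_{k,n}(t−1) is at least 1/(k(n−1)). -/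
open Set Polynomial Pointwise

namespace EhrhartMatroid

variable {α : Type*}

/-! ### Auxiliary material for the proof -/

/-- The ascending factorial polynomial `t(t+1)⋯(t+j-1)`. -/
noncomputable def A (j : ℕ) : Polynomial ℚ := ∏ i ∈ Finset.range j, (X + C (i : ℚ))

lemma A_coeff_zero_succ (j : ℕ) :
    (A (j+1)).coeff 0 = (A j).coeff 0 * (j : ℚ) := by
  rw [A, Finset.prod_range_succ, mul_coeff_zero, ← A]
  simp [coeff_add, coeff_C]

lemma A_coeff_succ (j i : ℕ) :
    (A (j+1)).coeff (i+1) = (A j).coeff i + (j : ℚ) * (A j).coeff (i+1) := by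
  have h : (X + C (j:ℚ)) = X - C (-(j:ℚ)) := by ring_nf; simp
  rw [A, Finset.prod_range_succ, ← A, h, coeff_mul_X_sub_C]
  ring

lemma A_coeff_nonneg (j i : ℕ) : 0 ≤ (A j).coeff i := by
  induction j generalizing i with
  | zero => simp [A]; by_cases h : i = 0 <;> simp [h, coeff_one]
  | succ j ih =>
    cases i with
    | zero => exact mul_nonneg (ih 0) (Nat.cast_nonneg j)
      |>.trans_eq (A_coeff_zero_succ j).symm
    | succ i =>
      rw [A_coeff_succ]
      exact add_nonneg (ih i) (mul_nonneg (Nat.cast_nonneg j) (ih (i+1)))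

lemma A_coeff_zero (j : ℕ) (hj : 1 ≤ j) : (A j).coeff 0 = 0 := by
  induction j with
  | zero => omega
  | succ j ih =>
    rw [A_coeff_zero_succ]
    rcases Nat.eq_zero_or_pos j with rfl | h
    · simp
    · rw [ih h, zero_mul]

lemma A_coeff_one (j : ℕ) (hj : 1 ≤ j) :
    (A j).coeff 1 = ((j-1).factorial : ℚ) := by
  induction j with
  | zero => omega
  | succ j ih =>
    rw [show (1:ℕ) = 0 + 1 from rfl, A_coeff_succ]
    rcases Nat.eq_zero_or_pos j with rfl | h
    · simp [A]
    · rw [ih h, A_coeff_zero j h]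
      rw [zero_add, Nat.add_sub_cancel]
      rw [← Nat.cast_mul, Nat.mul_factorial_pred h.ne']

lemma binomPoly_comp (j : ℕ) :
    (binomPoly j).comp (X - 1) = C (1 / (j.factorial : ℚ)) * A j := by
  rw [binomPoly, mul_comp, C_comp, Polynomial.prod_comp, A]
  congr 1
  refine Finset.prod_congr rfl fun i _ => ?_
  rw [add_comp, X_comp, C_comp, map_add, C_1]
  ring

lemma le_choose (N r : ℕ) (h1 : 1 ≤ r) (h2 : r < N) : N ≤ N.choose r := by
  induction N generalizing r with
  | zero => omega
  | succ N ih =>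
    rcases eq_or_lt_of_le h1 with rfl | hr
    · simp
    · rcases eq_or_lt_of_le (Nat.lt_succ_iff.mp h2) with rfl | hrN
      · rw [Nat.choose_succ_self_right]
      · obtain ⟨s, rfl⟩ : ∃ s, r = s + 1 := ⟨r - 1, by omega⟩
        rw [Nat.choose_succ_succ]
        have hs : 1 ≤ N.choose s := Nat.choose_pos (by omega)
        have := ih (s+1) h1 hrN
        simp only [Nat.succ_eq_add_one]
        omega

lemma hockey (m k : ℕ) (hm : 1 ≤ m) (hk : 1 ≤ k) :
    ∑ j ∈ Finset.range k, (m - 1 + j).choose j = (m + k - 1).choose (k - 1) := by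
  obtain ⟨K, rfl⟩ : ∃ K, k = K + 1 := ⟨k - 1, by omega⟩
  obtain ⟨M, rfl⟩ : ∃ M, m = M + 1 := ⟨m - 1, by omega⟩
  have h1 : ∀ j, (M + 1 - 1 + j).choose j = (j + M).choose M := by
    intro j
    rw [Nat.add_sub_cancel, Nat.add_comm M j]
    simpa using Nat.choose_symm (Nat.le_add_left M j)
  simp only [h1]
  rw [Nat.sum_range_add_choose K M]
  rw [← Nat.choose_symm (show M + 1 ≤ K + M + 1 by omega)]
  congr 1 <;> omega


theorem coeff_two_Fshift_lower_bound (n k : ℕ) (hk : 2 ≤ k) (hkn : k ≤ n - 1) :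
    1 / ((k : ℚ) * ((n : ℚ) - 1)) ≤ (Fshift k n).coeff 2 := by
  have hn : k + 1 ≤ n := by omega
  have hm1 : 1 ≤ n - k := by omega
  have hBpos : 0 < (n-1).choose (k-1) := Nat.choose_pos (by omega)
  set m := n - k with hmdef
  set Bn := (n - 1).choose (k - 1) with hBdef
  -- the coefficient function
  set e : ℕ → ℚ := fun j => (1 / (Bn : ℚ)) * (1 / (m.factorial : ℚ)) *
      ((((m - 1 + j).choose j : ℕ) : ℚ) * (1 / (j.factorial : ℚ))) with hedef
  have hF : Fshift k n = ∑ j ∈ Finset.range k, C (e j) * (A m * A j) := by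
    rw [Fshift, F, mul_comp, mul_comp, C_comp, binomPoly_comp, Polynomial.sum_comp,
      Finset.mul_sum]
    refine Finset.sum_congr rfl fun j _ => ?_
    rw [mul_comp, C_comp, binomPoly_comp, hedef]
    simp only [map_mul, map_one, map_div₀, Polynomial.C_1]
    ring
  have hF2 : (Fshift k n).coeff 2 = ∑ j ∈ Finset.range k, e j * (A m * A j).coeff 2 := by
    rw [hF, Polynomial.finset_sum_coeff]
    simp only [Polynomial.coeff_C_mul]
  have he_nonneg : ∀ j, 0 ≤ e j := by
    intro j; rw [hedef]; positivity
  have hco_nonneg : ∀ j, 0 ≤ (A m * A j).coeff 2 := by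
    intro j
    rw [Polynomial.coeff_mul]
    exact Finset.sum_nonneg fun p _ => mul_nonneg (A_coeff_nonneg _ _) (A_coeff_nonneg _ _)
  set h : ℕ → ℚ := fun j => if j = 0 then (0:ℚ) else
      (((m - 1 + j).choose j : ℕ) : ℚ) / ((Bn : ℚ) * m * ((k:ℚ) - 1)) with hhdef
  have hDpos : (0:ℚ) < (Bn : ℚ) * m * ((k:ℚ) - 1) := by
    have h2 : (2:ℚ) ≤ (k:ℚ) := by exact_mod_cast hk
    have : (0:ℚ) < (Bn:ℚ) := by exact_mod_cast hBpos
    have hm' : (0:ℚ) < (m:ℚ) := by exact_mod_cast hm1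
    exact mul_pos (mul_pos this hm') (by linarith)
  have key : ∀ j ∈ Finset.range k, h j ≤ e j * (A m * A j).coeff 2 := by
    intro j hj
    rcases eq_or_ne j 0 with rfl | hj0
    · simp only [hhdef, if_pos]
      exact mul_nonneg (he_nonneg 0) (hco_nonneg 0)
    · have hj1 : 1 ≤ j := by omega
      have hjk : j ≤ k - 1 := by
        simp only [Finset.mem_range] at hj; omega
      have hcoeff : ((m-1).factorial : ℚ) * ((j-1).factorial : ℚ) ≤ (A m * A j).coeff 2 := by
        rw [Polynomial.coeff_mul]
        have hmem : ((1:ℕ),(1:ℕ)) ∈ Finset.HasAntidiagonal.antidiagonal (2:ℕ) := by decide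
        have := Finset.single_le_sum
          (f := fun p : ℕ × ℕ => (A m).coeff p.1 * (A j).coeff p.2)
          (fun p _ => mul_nonneg (A_coeff_nonneg _ _) (A_coeff_nonneg _ _)) hmem
        simpa [A_coeff_one m hm1, A_coeff_one j hj1] using this
      have hmf : (m.factorial : ℚ) = (m : ℚ) * ((m-1).factorial : ℚ) := by
        exact_mod_cast (Nat.mul_factorial_pred (Nat.pos_iff_ne_zero.mp hm1)).symm
      have hjf : (j.factorial : ℚ) = (j : ℚ) * ((j-1).factorial : ℚ) := by
        exact_mod_cast (Nat.mul_factorial_pred (Nat.pos_iff_ne_zero.mp hj1)).symm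
      have hmne : ((m-1).factorial : ℚ) ≠ 0 := by positivity
      have hjne : ((j-1).factorial : ℚ) ≠ 0 := by positivity
      have hBne : (Bn : ℚ) ≠ 0 := by positivity
      have hmQ : ((m:ℚ)) ≠ 0 := by
        have : (0:ℚ) < (m:ℚ) := by exact_mod_cast hm1
        linarith
      have hjQ : ((j:ℚ)) ≠ 0 := by
        have : (0:ℚ) < (j:ℚ) := by exact_mod_cast hj1
        linarith
      have heq : e j * (((m-1).factorial : ℚ) * ((j-1).factorial : ℚ))
          = (((m - 1 + j).choose j : ℕ) : ℚ) / ((Bn : ℚ) * m * j) := by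
        rw [hedef]
        simp only
        rw [hmf, hjf]
        field_simp
      have hstep1 : h j ≤ (((m - 1 + j).choose j : ℕ) : ℚ) / ((Bn : ℚ) * m * j) := by
        rw [hhdef]
        simp only [if_neg hj0]
        apply div_le_div_of_nonneg_left (by positivity)
        · positivity
        · have h1 : (j:ℚ) ≤ (k:ℚ) - 1 := by
            have : ((j:ℚ)) ≤ ((k-1 : ℕ):ℚ) := by exact_mod_cast hjk
            rw [Nat.cast_sub (by omega)] at this
            simpa using this
          exact mul_le_mul_of_nonneg_left h1 (by positivity)
      calc h j ≤ (((m - 1 + j).choose j : ℕ) : ℚ) / ((Bn : ℚ) * m * j) := hstep1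
        _ = e j * (((m-1).factorial : ℚ) * ((j-1).factorial : ℚ)) := heq.symm
        _ ≤ e j * (A m * A j).coeff 2 :=
            mul_le_mul_of_nonneg_left hcoeff (he_nonneg j)
  have hsum : 1 / ((k : ℚ) * ((n : ℚ) - 1)) ≤ ∑ j ∈ Finset.range k, h j := by
    obtain ⟨K, hKdef⟩ : ∃ K, k = K + 1 := ⟨k - 1, by omega⟩
    have hK1 : 1 ≤ K := by omega
    -- the natural-number sum
    have hnat : ∑ i ∈ Finset.range K, (m - 1 + (i+1)).choose (i+1) = Bn - 1 := by
      have hh := hockey m k hm1 (by omega)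
      have hmk : m + k - 1 = n - 1 := by omega
      rw [hmk] at hh
      rw [hKdef] at hh
      rw [Finset.sum_range_succ'] at hh
      simp only [Nat.add_zero, Nat.choose_zero_right] at hh
      have hBn : (n - 1).choose (K + 1 - 1) = Bn := by
        rw [hBdef]; congr 1; omega
      rw [hBn] at hh
      omega
    rw [hKdef, Finset.sum_range_succ']
    rw [← hKdef]
    have h0 : h 0 = 0 := by simp [hhdef]
    rw [h0, add_zero]
    have hterm : ∀ i, h (i+1) =
        (((m - 1 + (i+1)).choose (i+1) : ℕ) : ℚ) / ((Bn : ℚ) * m * ((k:ℚ) - 1)) := by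
      intro i; simp [hhdef]
    simp only [hterm]
    rw [← Finset.sum_div, ← Nat.cast_sum, hnat]
    have hBcast : ((Bn - 1 : ℕ) : ℚ) = (Bn : ℚ) - 1 := by
      rw [Nat.cast_sub (by omega)]
      simp
    rw [hBcast]
    have hBge : ((n:ℚ) - 1) ≤ (Bn : ℚ) := by
      have := le_choose (n-1) (k-1) (by omega) (by omega)
      rw [← hBdef] at this
      have h2 : ((n - 1 : ℕ):ℚ) ≤ (Bn:ℚ) := by exact_mod_cast this
      rw [Nat.cast_sub (by omega)] at h2
      simpa using h2
    have hmcast : (m : ℚ) = (n:ℚ) - (k:ℚ) := by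
      rw [hmdef, Nat.cast_sub (by omega)]
    have hkQ : (2:ℚ) ≤ (k:ℚ) := by exact_mod_cast hk
    have hnQ : (k:ℚ) + 1 ≤ (n:ℚ) := by exact_mod_cast hn
    have hkn1 : (0:ℚ) < (k:ℚ) * ((n:ℚ) - 1) := by nlinarith
    rw [div_le_div_iff₀ hkn1 hDpos, hmcast]
    have haux1 : (0:ℚ) ≤ ((Bn:ℚ) - ((n:ℚ)-1)) * ((n:ℚ) + (k:ℚ)^2 - 2*(k:ℚ)) := by
      apply mul_nonneg (by linarith)
      nlinarith [sq_nonneg ((k:ℚ) - 1)]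
    have haux2 : (0:ℚ) ≤ ((n:ℚ)-1) * ((n:ℚ) + (k:ℚ)^2 - 3*(k:ℚ)) := by
      apply mul_nonneg (by linarith)
      nlinarith [sq_nonneg ((k:ℚ) - 1)]
    nlinarith [haux1, haux2]
  calc 1 / ((k : ℚ) * ((n : ℚ) - 1)) ≤ ∑ j ∈ Finset.range k, h j := hsum
    _ ≤ ∑ j ∈ Finset.range k, e j * (A m * A j).coeff 2 := Finset.sum_le_sum key
    _ = (Fshift k n).coeff 2 := hF2.symm


end EhrhartMatroid
end

section
/- Let M be a sparse paving matroid of rank k on an n-element ground set having exactly λ circuit-hyperplanes. Then λ·(k+1) ≤ binom(n,k) and λ·(n−k+1) ≤ binom(n,k). -/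
open Set Polynomial Pointwise

namespace EhrhartMatroid

variable {α : Type*}

section Aux

variable {n k : ℕ} {M : Matroid (Fin n)}

lemma base_ncard_eq (hrk : rank M = k) {B : Set (Fin n)} (hB : M.IsBase B) : B.ncard = k := by
  obtain ⟨B₀, hB₀⟩ := M.exists_isBase
  have hset : {m | ∃ B, M.IsBase B ∧ B.ncard = m} = {B₀.ncard} := by
    ext m
    simp only [Set.mem_setOf_eq, Set.mem_singleton_iff]
    constructor
    · rintro ⟨B', hB', rfl⟩
      exact hB'.ncard_eq_ncard_of_isBase hB₀
    · rintro rfl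
      exact ⟨B₀, hB₀, rfl⟩
  have : rank M = B₀.ncard := by
    rw [rank, hset, csSup_singleton]
  rw [hB.ncard_eq_ncard_of_isBase hB₀, ← this, hrk]

lemma ch_ncard (hE : M.E = Set.univ) (hrk : rank M = k) (hpav : IsPaving M)
    {H : Set (Fin n)} (hH : IsCircuitHyperplane M H) : H.ncard = k := by
  have hHfin : H.Finite := Set.toFinite H
  have hge : k ≤ H.ncard := hrk ▸ hpav H hH.1
  obtain ⟨e, he⟩ : H.Nonempty := hH.1.1.nonempty
  have hpos : 0 < H.ncard := (Set.ncard_pos hHfin).mpr ⟨e, he⟩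
  -- upper bound
  have hHE : H ⊆ M.E := by rw [hE]; exact Set.subset_univ _
  have hind : M.Indep (H \ {e}) :=
    hH.1.2 _ (Set.sdiff_singleton_ssubset.2 he)
  obtain ⟨I, hI, hsub⟩ := hind.subset_isBasis_of_subset (Set.diff_subset) hHE
  have hIclos : M.closure I = H := by
    rw [hI.closure_eq_closure, hH.2.1.closure]
  have hInotbase : ¬ M.IsBase I := by
    intro hIb
    exact hH.2.2.1 (by rw [← hIclos, hIb.closure_eq])
  obtain ⟨B, hBb, hIB⟩ := hI.indep.exists_isBase_superset
  have hIltB : I.ncard < B.ncard := by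
    refine Set.ncard_lt_ncard ?_ (Set.toFinite B)
    exact hIB.ssubset_of_ne (fun h => hInotbase (h ▸ hBb))
  have hBk : B.ncard = k := base_ncard_eq hrk hBb
  have hdiff : (H \ {e}).ncard = H.ncard - 1 := Set.ncard_diff_singleton_of_mem he
  have h1 : (H \ {e}).ncard ≤ I.ncard := Set.ncard_le_ncard hsub (Set.toFinite I)
  omega

lemma ch_eq_of_diff_subset_singleton {A B : Set (Fin n)}
    (hA : IsCircuitHyperplane M A) (hB : IsCircuitHyperplane M B)
    (hcard : A.ncard = B.ncard) (f : Fin n) (h : B \ A ⊆ {f}) : B = A := by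
  have hBA : B ⊆ A := by
    by_cases hf : f ∈ B ∧ f ∉ A
    · obtain ⟨hfB, hfA⟩ := hf
      exfalso
      have hsub : B \ {f} ⊆ A := by
        intro x hx
        by_contra hxA
        have : x ∈ B \ A := ⟨hx.1, hxA⟩
        exact hx.2 (h this)
      have hind : M.Indep (B \ {f}) :=
        hB.1.2 _ (Set.sdiff_singleton_ssubset.2 hfB)
      have hBins : B = insert f (B \ {f}) := by
        rw [Set.insert_diff_singleton, Set.insert_eq_of_mem hfB]
      have hdep : M.Dep (insert f (B \ {f})) := hBins ▸ hB.1.1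
      have hfcl : f ∈ M.closure (B \ {f}) := (hind.insert_dep_iff.1 hdep).1
      have : f ∈ A := by
        have h1 : M.closure (B \ {f}) ⊆ M.closure A := M.closure_subset_closure hsub
        rw [hA.2.1.closure] at h1
        exact h1 hfcl
      exact hfA this
    · intro x hx
      by_contra hxA
      have hxf : x = f := h ⟨hx, hxA⟩
      subst hxf
      push_neg at hf
      exact hxA (hf hx)
  exact Set.eq_of_subset_of_ncard_le hBA (le_of_eq hcard) (Set.toFinite A)

end Aux

theorem circuitHyperplane_count_bound (n k lam : ℕ) (M : Matroid (Fin n))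
    (hE : M.E = Set.univ) (hM : IsSparsePaving M) (hrk : rank M = k)
    (hlam : {H | IsCircuitHyperplane M H}.ncard = lam) :
    lam * (k + 1) ≤ n.choose k ∧ lam * (n - k + 1) ≤ n.choose k := by
  classical
  -- k ≤ n
  obtain ⟨B₀, hB₀⟩ := M.exists_isBase
  have hB₀k : B₀.ncard = k := base_ncard_eq hrk hB₀
  have hkn : k ≤ n := by
    have := Set.ncard_le_ncard (Set.subset_univ B₀) (Set.finite_univ)
    rwa [hB₀k, Set.ncard_univ, Nat.card_eq_fintype_card, Fintype.card_fin] at this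
  -- the finset of circuit-hyperplanes
  set F : Finset (Finset (Fin n)) :=
    Finset.univ.filter (fun A => IsCircuitHyperplane M (↑A : Set (Fin n))) with hF
  have hmemF : ∀ A : Finset (Fin n), A ∈ F ↔ IsCircuitHyperplane M (↑A : Set (Fin n)) := by
    intro A; simp [hF]
  have hlamF : lam = F.card := by
    have himg : {H | IsCircuitHyperplane M H}
        = ↑(F.image (fun A : Finset (Fin n) => (↑A : Set (Fin n)))) := by
      ext H
      simp only [Finset.coe_image, Set.mem_image, Finset.mem_coe, Set.mem_setOf_eq]
      constructor
      · intro hH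
        exact ⟨H.toFinset, (hmemF _).2 (by rwa [Set.coe_toFinset]), Set.coe_toFinset H⟩
      · rintro ⟨A, hA, rfl⟩
        exact (hmemF A).1 hA
    rw [← hlam, himg, Set.ncard_coe_finset,
      Finset.card_image_of_injective _ Finset.coe_injective]
  have hcardk : ∀ A ∈ F, A.card = k := by
    intro A hA
    have := ch_ncard hE hrk hM.1 ((hmemF A).1 hA)
    rwa [Set.ncard_coe_finset] at this
  -- key rigidity facts
  have hkey : ∀ A ∈ F, ∀ B ∈ F, ∀ f : Fin n,
      ((↑B : Set (Fin n)) \ ↑A ⊆ {f}) → B = A := by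
    intro A hA B hB f hsub
    have := ch_eq_of_diff_subset_singleton ((hmemF A).1 hA) ((hmemF B).1 hB)
      (by rw [Set.ncard_coe_finset, Set.ncard_coe_finset, hcardk A hA, hcardk B hB]) f hsub
    exact Finset.coe_injective this
  have herase : ∀ A ∈ F, ∀ B ∈ F, ∀ a ∈ A, ∀ b ∈ B, A.erase a = B.erase b → B = A := by
    intro A hA B hB a ha b hb hab
    refine hkey A hA B hB b ?_
    intro x hx
    simp only [Set.mem_diff, Finset.mem_coe] at hx
    by_contra hxb
    have hxb' : x ≠ b := by simpa using hxb
    have : x ∈ B.erase b := Finset.mem_erase.2 ⟨hxb', hx.1⟩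
    rw [← hab] at this
    exact hx.2 (Finset.mem_of_mem_erase this)
  have hinsert : ∀ A ∈ F, ∀ B ∈ F, ∀ a ∉ A, ∀ b ∉ B,
      insert a A = insert b B → B = A := by
    intro A hA B hB a ha b hb hab
    refine hkey A hA B hB a ?_
    intro x hx
    simp only [Set.mem_diff, Finset.mem_coe] at hx
    have : x ∈ insert b B := Finset.mem_insert_of_mem hx.1
    rw [← hab] at this
    rcases Finset.mem_insert.1 this with h | h
    · simpa using h
    · exact absurd h hx.2
  -- Bound A : lam * k ≤ choose n (k-1)
  have boundA : lam * k ≤ n.choose (k - 1) := by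
    have hdisj : ∀ A ∈ F, ∀ B ∈ F, A ≠ B →
        Disjoint (A.image (fun a => A.erase a)) (B.image (fun b => B.erase b)) := by
      intro A hA B hB hAB
      rw [Finset.disjoint_left]
      rintro S hSA hSB
      obtain ⟨a, haA, rfl⟩ := Finset.mem_image.1 hSA
      obtain ⟨b, hbB, hab⟩ := Finset.mem_image.1 hSB
      exact hAB (herase A hA B hB a haA b hbB hab.symm).symm
    have hcardbi : (F.biUnion (fun A => A.image (fun a => A.erase a))).card = F.card * k := by
      have hsum : ∀ A ∈ F, (A.image (fun a => A.erase a)).card = k := by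
        intro A hA
        have hin : Set.InjOn (fun a => A.erase a) ↑A := by
          intro a ha b hb hab
          by_contra hne
          have haA : a ∈ A := ha
          have hab' : A.erase a = A.erase b := hab
          have h2 : a ∈ A.erase b := Finset.mem_erase.2 ⟨hne, haA⟩
          rw [← hab'] at h2
          exact (Finset.notMem_erase a A) h2
        rw [Finset.card_image_of_injOn hin, hcardk A hA]
      rw [Finset.card_biUnion hdisj, Finset.sum_congr rfl hsum, Finset.sum_const, smul_eq_mul]
    have hsubbi : F.biUnion (fun A => A.image (fun a => A.erase a))
        ⊆ Finset.powersetCard (k - 1) Finset.univ := by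
      intro S hS
      obtain ⟨A, hA, hS'⟩ := Finset.mem_biUnion.1 hS
      obtain ⟨a, ha, rfl⟩ := Finset.mem_image.1 hS'
      rw [Finset.mem_powersetCard]
      exact ⟨Finset.subset_univ _, by rw [Finset.card_erase_of_mem ha, hcardk A hA]⟩
    have := Finset.card_le_card hsubbi
    rwa [hcardbi, Finset.card_powersetCard, Finset.card_univ, Fintype.card_fin,
      ← hlamF] at this
  -- Bound B : lam * (n - k) ≤ choose n (k+1)
  have boundB : lam * (n - k) ≤ n.choose (k + 1) := by
    have hdisj : ∀ A ∈ F, ∀ B ∈ F, A ≠ B →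
        Disjoint ((Finset.univ \ A).image (fun x => insert x A))
          ((Finset.univ \ B).image (fun x => insert x B)) := by
      intro A hA B hB hAB
      rw [Finset.disjoint_left]
      rintro S hSA hSB
      obtain ⟨a, haA, rfl⟩ := Finset.mem_image.1 hSA
      obtain ⟨b, hbB, hab⟩ := Finset.mem_image.1 hSB
      simp only [Finset.mem_sdiff, Finset.mem_univ, true_and] at haA hbB
      exact hAB (hinsert A hA B hB a haA b hbB hab.symm).symm
    have hcardbi : (F.biUnion (fun A => (Finset.univ \ A).image (fun x => insert x A))).card
        = F.card * (n - k) := by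
      have hsum : ∀ A ∈ F, ((Finset.univ \ A).image (fun x => insert x A)).card = n - k := by
        intro A hA
        have hin : Set.InjOn (fun x => insert x A) ↑(Finset.univ \ A) := by
          intro a ha b hb hab
          simp only [Finset.coe_sdiff, Finset.coe_univ, Set.mem_diff, Set.mem_univ, true_and,
            Finset.mem_coe] at ha hb
          have hab' : insert a A = insert b A := hab
          have h2 : a ∈ insert b A := by
            rw [← hab']; exact Finset.mem_insert_self a A
          rcases Finset.mem_insert.1 h2 with h | h
          · exact h
          · exact absurd h ha
        rw [Finset.card_image_of_injOn hin, Finset.card_sdiff_of_subset (Finset.subset_univ A),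
          Finset.card_univ, Fintype.card_fin, hcardk A hA]
      rw [Finset.card_biUnion hdisj, Finset.sum_congr rfl hsum, Finset.sum_const, smul_eq_mul]
    have hsubbi : F.biUnion (fun A => (Finset.univ \ A).image (fun x => insert x A))
        ⊆ Finset.powersetCard (k + 1) Finset.univ := by
      intro S hS
      obtain ⟨A, hA, hS'⟩ := Finset.mem_biUnion.1 hS
      obtain ⟨a, ha, rfl⟩ := Finset.mem_image.1 hS'
      simp only [Finset.mem_sdiff, Finset.mem_univ, true_and] at ha
      rw [Finset.mem_powersetCard]
      exact ⟨Finset.subset_univ _, by rw [Finset.card_insert_of_notMem ha, hcardk A hA]⟩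
    have := Finset.card_le_card hsubbi
    rwa [hcardbi, Finset.card_powersetCard, Finset.card_univ, Fintype.card_fin,
      ← hlamF] at this
  constructor
  · -- lam * (k+1) ≤ choose n k
    rcases eq_or_lt_of_le hkn with heq | hlt
    · -- k = n : lam = 0
      have hlam0 : lam = 0 := by
        rw [hlamF, Finset.card_eq_zero]
        by_contra hne
        obtain ⟨A, hA⟩ := Finset.nonempty_iff_ne_empty.2 hne
        have hch := (hmemF A).1 hA
        have hcard := hcardk A hA
        have hAu : A = Finset.univ := Finset.eq_univ_of_card A (by
          rw [hcard, Fintype.card_fin]; exact heq)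
        apply hch.2.2.1
        rw [hAu, hE]
        simp
      simp [hlam0]
    · have hpos : 0 < n - k := Nat.sub_pos_of_lt hlt
      have h1 : lam * (n - k) * (k + 1) ≤ n.choose (k + 1) * (k + 1) :=
        Nat.mul_le_mul_right _ boundB
      rw [Nat.choose_succ_right_eq] at h1
      have h2 : lam * (k + 1) * (n - k) ≤ n.choose k * (n - k) := by
        calc lam * (k + 1) * (n - k) = lam * (n - k) * (k + 1) := by ring
        _ ≤ n.choose k * (n - k) := h1
      exact Nat.le_of_mul_le_mul_right h2 hpos
  · -- lam * (n-k+1) ≤ choose n k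
    rcases Nat.eq_zero_or_pos k with hk0 | hkpos
    · have hlam0 : lam = 0 := by
        rw [hlamF, Finset.card_eq_zero]
        by_contra hne
        obtain ⟨A, hA⟩ := Finset.nonempty_iff_ne_empty.2 hne
        have hch := (hmemF A).1 hA
        have hcard := hcardk A hA
        rw [hk0, Finset.card_eq_zero] at hcard
        subst hcard
        have := hch.1.1.nonempty
        simp at this
      simp [hlam0]
    · obtain ⟨k', rfl⟩ : ∃ k', k = k' + 1 := ⟨k - 1, by omega⟩
      have hid : n.choose (k' + 1) * (k' + 1) = n.choose k' * (n - k') :=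
        Nat.choose_succ_right_eq n k'
      have hb : lam * (k' + 1) ≤ n.choose k' := by simpa using boundA
      have h1 : lam * (k' + 1) * (n - k') ≤ n.choose k' * (n - k') :=
        Nat.mul_le_mul_right _ hb
      rw [← hid] at h1
      have hnk : n - (k' + 1) + 1 = n - k' := by omega
      have h2 : lam * (n - (k' + 1) + 1) * (k' + 1) ≤ n.choose (k' + 1) * (k' + 1) := by
        calc lam * (n - (k' + 1) + 1) * (k' + 1) = lam * (k' + 1) * (n - (k' + 1) + 1) := by ring
        _ = lam * (k' + 1) * (n - k') := by rw [hnk]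
        _ ≤ n.choose (k' + 1) * (k' + 1) := h1
      exact Nat.le_of_mul_le_mul_right h2 (Nat.succ_pos k')


end EhrhartMatroid
end

section
/- For all integers n ≥ 4 and 2 ≤ m ≤ n−1, the unsigned Stirling numbers of the first kind satisfy 2·c(n,m+1)·(2^m − m − 1) + 2·(n−1)·c(n−1,m+1) ≥ n·( c(n−2,m) + (n−2)·c(n−2,m−1) ). -/
open Set Polynomial Pointwise

namespace EhrhartMatroid

variable {α : Type*}

noncomputable def StirS (n m : ℕ) : ℕ := (ascPochhammer ℕ n).coeff m

lemma S_rec (n m : ℕ) : StirS (n+1) (m+1) = StirS n m + n * StirS n (m+1) := by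
  unfold StirS
  rw [ascPochhammer_succ_right, mul_add, coeff_add, coeff_mul_X]
  congr 1
  rw [← C_eq_natCast, mul_comm, coeff_C_mul]
  simp

lemma S_zero (n : ℕ) : StirS (n+1) 0 = 0 := by
  unfold StirS
  rw [coeff_zero_eq_eval_zero, ascPochhammer_eval_zero]
  simp

lemma S_diag (n : ℕ) : StirS n n = 1 := by
  have h := monic_ascPochhammer ℕ (n := n)
  unfold Polynomial.Monic Polynomial.leadingCoeff at h
  rw [ascPochhammer_natDegree] at h
  exact h

lemma S21 : StirS 2 1 = 1 := by
  have h : StirS 2 1 = StirS 1 0 + 1 * StirS 1 1 := S_rec 1 0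
  have hz : StirS 1 0 = 0 := S_zero 0
  have hd : StirS 1 1 = 1 := S_diag 1
  omega

lemma S32 : StirS 3 2 = 3 := by
  have h : StirS 3 2 = StirS 2 1 + 2 * StirS 2 2 := S_rec 2 1
  have hd : StirS 2 2 = 1 := S_diag 2
  have := S21
  omega

lemma S43 : StirS 4 3 = 6 := by
  have h : StirS 4 3 = StirS 3 2 + 3 * StirS 3 3 := S_rec 3 2
  have hd : StirS 3 3 = 1 := S_diag 3
  have := S32
  omega

lemma pow_fact (j : ℕ) : j + 3 ≤ 2^(j+2) := by
  have := Nat.lt_two_pow_self (n := j+2)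
  omega

lemma sq_le_pow (k : ℕ) : (k+4)*(k+4) ≤ 2^(k+4) := by
  induction k with
  | zero => norm_num
  | succ k ih =>
    have e : 2*((k+4)*(k+4)) = (k+1+4)*(k+1+4) + (k*k + 6*k + 7) := by ring
    have e2 : (2:ℕ)^(k+1+4) = 2*2^(k+4) := by ring
    have hk : 0 ≤ k*k := Nat.zero_le _
    omega

lemma L2 : ∀ k j, j ≤ k+1 →
    (k+4)*(k+2)*StirS (k+2) (j+1) ≤ 2*(2^(j+2) - (j+3))*StirS (k+4) (j+3) := by
  intro k
  induction k with
  | zero =>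
    intro j hj
    interval_cases j
    · have h1 : StirS 2 (0+1) = 1 := S21
      have h2 : StirS 4 (0+3) = 6 := S43
      rw [show (0:ℕ)+4 = 4 from rfl, show (0:ℕ)+2 = 2 from rfl, h1, h2]
      norm_num
    · have h1 : StirS 2 (1+1) = 1 := S_diag 2
      have h2 : StirS 4 (1+3) = 1 := S_diag 4
      rw [show (0:ℕ)+4 = 4 from rfl, show (0:ℕ)+2 = 2 from rfl, h1, h2]
      norm_num
  | succ k ih =>
    intro j hj
    rcases Nat.lt_or_ge j (k+2) with hlt | hge
    · -- main inductive case
      have hj' : j ≤ k+1 := by omega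
      have IH1 := ih j hj'
      have e1 : StirS (k+1+4) (j+3) = StirS (k+4) (j+2) + (k+4)*StirS (k+4) (j+3) := S_rec (k+4) (j+2)
      have e2 : StirS (k+1+2) (j+1) = StirS (k+2) j + (k+2)*StirS (k+2) (j+1) := S_rec (k+2) j
      rw [e1, e2]
      have key0 : (k+1+4)*(k+1+2)*StirS (k+2) j ≤ 2*(2^(j+2)-(j+3))*StirS (k+4) (j+2) := by
        cases j with
        | zero =>
          have hz : StirS (k+2) 0 = 0 := S_zero (k+1)
          rw [hz]; simp
        | succ i =>
          have IH2 : (k+4)*(k+2)*StirS (k+2) (i+1) ≤ 2*(2^(i+2)-(i+3))*StirS (k+4) (i+1+2) :=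
            ih i (by omega)
          have hq : 2^(i+1+2) - (i+1+3) = 2*(2^(i+2)-(i+3)) + (i+2) := by
            have h1 := pow_fact i
            have h2 : (2:ℕ)^(i+1+2) = 2*2^(i+2) := by ring
            omega
          rw [hq]
          have s1 : (k+1+4)*(k+1+2)*StirS (k+2) (i+1) ≤ 2*((k+4)*(k+2)*StirS (k+2) (i+1)) := by
            have e : 2*((k+4)*(k+2)*StirS (k+2) (i+1)) =
                (k+1+4)*(k+1+2)*StirS (k+2) (i+1) + (k*k+4*k+1)*StirS (k+2) (i+1) := by ring
            have := Nat.zero_le ((k*k+4*k+1)*StirS (k+2) (i+1))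
            omega
          have s2 : 2*((k+4)*(k+2)*StirS (k+2) (i+1)) ≤ 2*(2*(2^(i+2)-(i+3))*StirS (k+4) (i+1+2)) :=
            Nat.mul_le_mul_left _ IH2
          have s3 : 2*(2*(2^(i+2)-(i+3))*StirS (k+4) (i+1+2)) ≤
              2*(2*(2^(i+2)-(i+3))+(i+2))*StirS (k+4) (i+1+2) := by
            have e : 2*(2*(2^(i+2)-(i+3))+(i+2))*StirS (k+4) (i+1+2) =
                2*(2*(2^(i+2)-(i+3))*StirS (k+4) (i+1+2)) + (2*(i+2))*StirS (k+4) (i+1+2) := by ring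
            have := Nat.zero_le ((2*(i+2))*StirS (k+4) (i+1+2))
            omega
          omega
      have key1 : (k+1+4)*(k+1+2)*((k+2)*StirS (k+2) (j+1)) ≤
          2*(2^(j+2)-(j+3))*((k+4)*StirS (k+4) (j+3)) := by
        have s1 : (k+1+4)*(k+1+2)*((k+2)*StirS (k+2) (j+1)) ≤
            (k+4)*((k+4)*(k+2)*StirS (k+2) (j+1)) := by
          have e : (k+4)*((k+4)*(k+2)*StirS (k+2) (j+1)) =
              (k+1+4)*(k+1+2)*((k+2)*StirS (k+2) (j+1)) + (k+2)*StirS (k+2) (j+1) := by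
            ring
          have := Nat.zero_le ((k+2)*StirS (k+2) (j+1))
          omega
        have s2 : (k+4)*((k+4)*(k+2)*StirS (k+2) (j+1)) ≤
            (k+4)*(2*(2^(j+2)-(j+3))*StirS (k+4) (j+3)) := Nat.mul_le_mul_left _ IH1
        have e3 : (k+4)*(2*(2^(j+2)-(j+3))*StirS (k+4) (j+3)) =
            2*(2^(j+2)-(j+3))*((k+4)*StirS (k+4) (j+3)) := by ring
        omega
      calc (k+1+4)*(k+1+2)*(StirS (k+2) j + (k+2)*StirS (k+2) (j+1))
          = (k+1+4)*(k+1+2)*StirS (k+2) j + (k+1+4)*(k+1+2)*((k+2)*StirS (k+2) (j+1)) := by ring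
        _ ≤ 2*(2^(j+2)-(j+3))*StirS (k+4) (j+2) + 2*(2^(j+2)-(j+3))*((k+4)*StirS (k+4) (j+3)) :=
            Nat.add_le_add key0 key1
        _ = 2*(2^(j+2)-(j+3))*(StirS (k+4) (j+2) + (k+4)*StirS (k+4) (j+3)) := by ring
    · -- top case j = k+2
      have hj2 : j = k+2 := by omega
      subst hj2
      have h1 : StirS (k+1+2) (k+2+1) = 1 := S_diag (k+3)
      have h2 : StirS (k+1+4) (k+2+3) = 1 := S_diag (k+5)
      rw [h1, h2]
      have h := sq_le_pow (k+1)
      have e : (k+1+4)*(k+1+4) = (k+1+4)*(k+1+2) + 2*(k+1+4) := by ring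
      have e3 : (2:ℕ)^(k+1+4) = 2*2^(k+2+2) := by ring
      have hp := pow_fact (k+2)
      omega

lemma final (k j : ℕ) (h : j ≤ k+1) :
    (k+4) * (StirS (k+2) (j+2) + (k+2) * StirS (k+2) (j+1)) ≤
    2 * StirS (k+4) (j+3) * (2^(j+2) - (j+2) - 1) + 2*(k+3)*StirS (k+3) (j+3) := by
  have h2 := L2 k j h
  have hL1 : StirS (k+2) (j+2) ≤ StirS (k+3) (j+3) := by
    have e : StirS (k+3) (j+3) = StirS (k+2) (j+2) + (k+2)*StirS (k+2) (j+3) := S_rec (k+2) (j+2)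
    omega
  have hsub : 2^(j+2) - (j+2) - 1 = 2^(j+2) - (j+3) := by omega
  rw [hsub]
  have t1 : (k+4)*StirS (k+2) (j+2) ≤ 2*(k+3)*StirS (k+3) (j+3) :=
    Nat.mul_le_mul (by omega) hL1
  calc (k+4)*(StirS (k+2) (j+2) + (k+2)*StirS (k+2) (j+1))
      = (k+4)*StirS (k+2) (j+2) + (k+4)*(k+2)*StirS (k+2) (j+1) := by ring
    _ ≤ 2*(k+3)*StirS (k+3) (j+3) + 2*(2^(j+2)-(j+3))*StirS (k+4) (j+3) := Nat.add_le_add t1 h2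
    _ = 2*StirS (k+4) (j+3)*(2^(j+2)-(j+3)) + 2*(k+3)*StirS (k+3) (j+3) := by ring

theorem stirling_inequality_target (n m : ℕ) (hn : 4 ≤ n) (hm : 2 ≤ m)
    (hmn : m ≤ n - 1) :
    n * ((ascPochhammer ℕ (n - 2)).coeff m +
        (n - 2) * (ascPochhammer ℕ (n - 2)).coeff (m - 1)) ≤
      2 * (ascPochhammer ℕ n).coeff (m + 1) * (2 ^ m - m - 1) +
        2 * (n - 1) * (ascPochhammer ℕ (n - 1)).coeff (m + 1) := by
  obtain ⟨k, rfl⟩ : ∃ k, n = k + 4 := ⟨n - 4, by omega⟩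
  obtain ⟨j, rfl⟩ : ∃ j, m = j + 2 := ⟨m - 2, by omega⟩
  have h := final k j (by omega)
  unfold StirS at h
  simp only [show k+4-2 = k+2 from by omega, show j+2-1 = j+1 from by omega,
    show k+4-1 = k+3 from by omega, show j+2+1 = j+3 from by omega]
  exact h

end EhrhartMatroid
end

section
/- For all integers m ≥ 13 and n ≥ m+1, the unsigned Stirling numbers of the first kind satisfy c(n,m−1) ≤ c(n,m+1)·(2^m − m − 2). -/
open Set Polynomial Pointwise

namespace EhrhartMatroid

variable {α : Type*}

noncomputable abbrev st (n k : ℕ) : ℕ := (ascPochhammer ℕ n).coeff k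

lemma st_rec (n k : ℕ) : st (n+1) (k+1) = st n k + n * st n (k+1) := by
  unfold st
  rw [ascPochhammer_succ_right, mul_add, coeff_add, coeff_mul_X]
  congr 1
  simp [mul_comm]

lemma st_diag (n : ℕ) : st n n = 1 := by
  have h : (ascPochhammer ℕ n).coeff ((ascPochhammer ℕ n).natDegree) = 1 :=
    monic_ascPochhammer ℕ n
  rwa [ascPochhammer_natDegree ℕ n] at h

lemma st_zero (n : ℕ) : st (n+1) 0 = 0 := by
  unfold st
  rw [coeff_zero_eq_eval_zero, ascPochhammer_eval_zero]
  simp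

lemma st_sub1 (n : ℕ) : 2 * st (n+1) n = n * (n+1) := by
  induction n with
  | zero => simp [st_zero]
  | succ n ih =>
    rw [st_rec, st_diag, mul_one, Nat.mul_add, ih]
    ring

lemma st_sub2 (k : ℕ) : 24 * st (k+2) k = (3*k+5)*(k+2)*(k+1)*k := by
  induction k with
  | zero => simp [st_zero]
  | succ k ih =>
    rw [st_rec]
    have h1 := st_sub1 (k+1)
    have h : 24 * (st (k+2) k + (k+2) * st (k+2) (k+1)) =
        24 * st (k+2) k + 12 * (k+2) * (2 * st (k+2) (k+1)) := by ring
    rw [h, ih, h1]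
    ring

lemma exp_bound : ∀ m, 12 ≤ m → (3*m+5)*(m+2)*(m+1)*m + 24*(m+3) ≤ 24 * 2^(m+1) := by
  intro m hm
  induction m with
  | zero => omega
  | succ m ih =>
    rcases Nat.lt_or_ge m 12 with h | h
    · have hm11 : m = 11 := by omega
      subst hm11; norm_num
    · have h1 := ih h
      have h2 : (3*(m+1)+5)*(m+1+2)*(m+1+1)*(m+1) + 24*(m+1+3) ≤
          2 * ((3*m+5)*(m+2)*(m+1)*m + 24*(m+3)) := by
        obtain ⟨t, rfl⟩ : ∃ t, m = 12 + t := ⟨m - 12, by omega⟩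
        nlinarith [sq_nonneg t, t.zero_le]
      calc _ ≤ 2 * ((3*m+5)*(m+2)*(m+1)*m + 24*(m+3)) := h2
        _ ≤ 2 * (24 * 2^(m+1)) := by omega
        _ = 24 * 2^(m+1+1) := by ring

lemma two_pow_lb (m : ℕ) (h : 3 ≤ m) : m + 2 ≤ 2^m := by
  induction m with
  | zero => omega
  | succ m ih =>
    rcases Nat.lt_or_ge m 3 with h' | h'
    · have h2 : m = 2 := by omega
      subst h2; norm_num
    · have := ih h'
      have : 2^(m+1) = 2 * 2^m := by ring
      omega

/-- boundary: st (j+2) j ≤ 2^m - m - 2 for j + 1 ≤ m, 13 ≤ m. -/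
lemma st_boundary (m j : ℕ) (hm : 13 ≤ m) (hj : j + 1 ≤ m) :
    st (j+2) j ≤ 2^m - m - 2 := by
  have h24 := st_sub2 j
  obtain ⟨i, rfl⟩ : ∃ i, m = i + 1 := ⟨m - 1, by omega⟩
  have hmono : (3*j+5)*(j+2)*(j+1)*j ≤ (3*i+5)*(i+2)*(i+1)*i := by
    have hji : j ≤ i := by omega
    exact Nat.mul_le_mul (Nat.mul_le_mul (Nat.mul_le_mul (by omega) (by omega)) (by omega)) hji
  have hexp := exp_bound i (by omega)
  have hlb := two_pow_lb (i+1) (by omega)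
  have hcomb : 24 * st (j+2) j + 24*(i+3) ≤ 24 * 2^(i+1) :=
    le_trans (Nat.add_le_add_right (le_trans (Nat.le_of_eq h24) hmono) _) hexp
  generalize 2^(i+1) = P at hcomb hlb ⊢
  omega

lemma st_main (m : ℕ) (hm : 13 ≤ m) :
    ∀ n j, j + 1 ≤ m → j + 2 ≤ n → st n j ≤ st n (j+2) * (2^m - m - 2) := by
  intro n
  induction n with
  | zero => omega
  | succ n ih =>
    intro j hjm hjn
    rcases Nat.lt_or_ge n (j+2) with hb | hb
    · -- n + 1 = j + 2
      have hn : n = j + 1 := by omega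
      subst hn
      rw [show j + 1 + 1 = j + 2 from rfl, st_diag, one_mul]
      exact st_boundary m j hm hjm
    · -- j + 2 ≤ n
      match j with
      | 0 =>
        obtain ⟨n', rfl⟩ : ∃ n', n = n' + 1 := ⟨n - 1, by omega⟩
        rw [st_zero]
        exact Nat.zero_le _
      | i + 1 =>
        rw [st_rec n i, show i + 1 + 2 = (i + 2) + 1 from rfl, st_rec n (i+2)]
        have ih1 : st n i ≤ st n (i+2) * (2^m - m - 2) := ih i (by omega) (by omega)
        have ih2 : st n (i+1) ≤ st n (i+3) * (2^m - m - 2) := ih (i+1) (by omega) (by omega)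
        calc st n i + n * st n (i+1)
            ≤ st n (i+2) * (2^m - m - 2) + n * (st n (i+3) * (2^m - m - 2)) :=
              Nat.add_le_add ih1 (Nat.mul_le_mul_left n ih2)
          _ = (st n (i+2) + n * st n (i+2+1)) * (2^m - m - 2) := by ring

theorem stirling_inequality_reduced (n m : ℕ) (hm : 13 ≤ m) (hn : m + 1 ≤ n) :
    (ascPochhammer ℕ n).coeff (m - 1) ≤
      (ascPochhammer ℕ n).coeff (m + 1) * (2 ^ m - m - 2) := by
  obtain ⟨j, rfl⟩ : ∃ j, m = j + 1 := ⟨m - 1, by omega⟩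
  have := st_main (j+1) hm n j (by omega) (by omega)
  simpa using this

end EhrhartMatroid
end

section
/- For every integer n ≥ 4, (n−1)(n−2)·( H_{n−1}² − H_{n−1}^{(2)} + H_{n−2}² − H_{n−2}^{(2)} ) ≥ n·H_{n−3} + n(n−2). -/
open Set Polynomial Pointwise

namespace EhrhartMatroid

variable {α : Type*}

/-- The generalized harmonic number of order 2: `H_n^{(2)} = Σ_{i=1}^n 1/i²`. -/
noncomputable def harmonicSq (n : ℕ) : ℚ :=
  ∑ i ∈ Finset.range n, 1 / ((i : ℚ) + 1) ^ 2

lemma harmonic_mono : Monotone harmonic := by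
  intro a b hab
  unfold harmonic
  apply Finset.sum_le_sum_of_subset_of_nonneg (Finset.range_subset_range.2 hab)
  intro i _ _
  positivity

lemma harmonicSq_le (n : ℕ) : harmonicSq n ≤ harmonic n := by
  unfold harmonicSq harmonic
  apply Finset.sum_le_sum
  intro i _
  rw [one_div]
  have h1 : (1:ℚ) ≤ (i:ℚ) + 1 := by linarith [Nat.cast_nonneg (α := ℚ) i]
  have h2 : ((i:ℚ)+1) ≤ ((i:ℚ)+1)^2 := by nlinarith
  have := inv_anti₀ (by positivity) h2
  have hcast : ((i+1 : ℕ) : ℚ) = (i:ℚ) + 1 := by push_cast; ring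
  rw [hcast]
  exact this

theorem harmonic_inequality (n : ℕ) (hn : 4 ≤ n) :
    (n : ℚ) * harmonic (n - 3) + (n : ℚ) * ((n : ℚ) - 2) ≤
      ((n : ℚ) - 1) * ((n : ℚ) - 2) *
        ((harmonic (n - 1)) ^ 2 - harmonicSq (n - 1) +
          (harmonic (n - 2)) ^ 2 - harmonicSq (n - 2)) := by
  obtain ⟨k, rfl⟩ := Nat.exists_eq_add_of_le hn
  have e1 : 4 + k - 3 = k + 1 := by omega
  have e2 : 4 + k - 2 = k + 2 := by omega
  have e3 : 4 + k - 1 = k + 3 := by omega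
  rw [e1, e2, e3]
  have eH : harmonic (k + 3) = harmonic (k + 2) + ((k:ℚ) + 3)⁻¹ := by
    have := harmonic_succ (k + 2)
    rw [show k + 2 + 1 = k + 3 by omega] at this
    rw [this]
    push_cast
    ring
  have eS : harmonicSq (k + 3) = harmonicSq (k + 2) + (((k:ℚ) + 3)⁻¹)^2 := by
    unfold harmonicSq
    rw [show k + 3 = (k + 2) + 1 by omega, Finset.sum_range_succ]
    push_cast
    rw [one_div, ← inv_pow, show ((k:ℚ)+2+1) = (k:ℚ)+3 from by ring]
  rw [eH, eS]
  set h := harmonic (k + 2) with hh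
  set s := harmonicSq (k + 2) with hs
  have h32 : (3:ℚ)/2 ≤ h := by
    have := harmonic_mono (show 2 ≤ k + 2 by omega)
    have h2 : harmonic 2 = 3/2 := by norm_num [harmonic_succ]
    rw [h2] at this
    exact this
  have hsh : s ≤ h := harmonicSq_le (k + 2)
  have h1h : harmonic (k + 1) ≤ h := harmonic_mono (by omega)
  have hk : (0:ℚ) ≤ (k:ℚ) := Nat.cast_nonneg k
  have h1nn : 0 ≤ harmonic (k+1) := le_of_lt (harmonic_pos (by omega))
  have hcast : ((4 + k : ℕ) : ℚ) = (k:ℚ) + 4 := by push_cast; ring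
  rw [hcast]
  have hd : ((k:ℚ)+3) ≠ 0 := by positivity
  have hinv : ((k:ℚ)+3) * ((k:ℚ)+3)⁻¹ = 1 := mul_inv_cancel₀ hd
  have hinvnn : (0:ℚ) ≤ ((k:ℚ)+3)⁻¹ := by positivity
  nlinarith [mul_nonneg hk (sub_nonneg.2 h1h), sq_nonneg (((k:ℚ)+3)⁻¹),
    mul_nonneg hk hinvnn, mul_nonneg (mul_nonneg hk hk) hinvnn,
    mul_nonneg hk (mul_nonneg hk (sub_nonneg.2 h1h)),
    mul_nonneg hk (sub_nonneg.2 hsh), mul_nonneg (mul_nonneg hk hk) (sub_nonneg.2 hsh),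
    mul_nonneg hk (sub_nonneg.2 h32), mul_nonneg (mul_nonneg hk hk) (sub_nonneg.2 h32),
    mul_nonneg (sub_nonneg.2 h32) (sub_nonneg.2 hsh),
    mul_nonneg hk (mul_nonneg (sub_nonneg.2 h32) (sub_nonneg.2 hsh)),
    mul_nonneg (mul_nonneg hk hk) (mul_nonneg (sub_nonneg.2 h32) (sub_nonneg.2 hsh))]


end EhrhartMatroid
end
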